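/- For each integer $n \geq 0$, let $D_n = \mathbb{C}[x,y,z]/(x^{n+1} z - y^2 + 1)$. Then for all integers $n, m \geq 0$, the polynomial rings $D_n[T]$ and $D_m[T]$ are isomorphic as $\mathbb{C}$-algebras. -/
import Mathlib


open MvPolynomial

noncomputable section

/-- The ideal of relations of the Danielewski surface `Sₙ = {x^{n+1} z = y² - 1}`. -/
def relD (n : ℕ) : Ideal (MvPolynomial (Fin 3) ℂ) :=
  Ideal.span {X 0 ^ (n + 1) * X 2 - X 1 ^ 2 + 1}

/-- The coordinate ring `Dₙ = ℂ[x,y,z]/(x^{n+1} z - y² + 1)` of the Danielewski surface. -/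
def Danielewski (n : ℕ) : Type :=
  MvPolynomial (Fin 3) ℂ ⧸ relD n

instance (n : ℕ) : CommRing (Danielewski n) := by unfold Danielewski; infer_instance

instance (n : ℕ) : Algebra ℂ (Danielewski n) := by unfold Danielewski; infer_instance

-- auxiliary
abbrev P4 := MvPolynomial (Fin 4) ℂ

def g4 (n : ℕ) : P4 := X 0 ^ (n + 1) * X 2 - X 1 ^ 2 + 1

def rel4 (n : ℕ) : Ideal P4 := Ideal.span {g4 n}

abbrev R4 (n : ℕ) := P4 ⧸ rel4 n

lemma eval_aeval' (v : Fin 4 → ℂ) (w : Fin 4 → P4) (p : P4) :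
    eval v (aeval w p) = eval (fun i => eval v (w i)) p := by
  induction p using MvPolynomial.induction_on with
  | C a => simp
  | add p q hp hq => simp only [map_add, eval_add, hp, hq]
  | mul_X p i hp => simp only [map_mul, eval_mul, aeval_X, hp, eval_X]


/-- forward substitution `R4 n → R4 (n+1)` on variables -/
def phiv (n : ℕ) : Fin 4 → P4 :=
  ![X 0,
    X 1 - X 0 ^ (n + 1) * X 3,
    X 0 * X 2 - 2 * X 1 * X 3 + X 0 ^ (n + 1) * X 3 ^ 2,
    -(X 0 ^ n * (X 0 * X 2 - 2 * X 1 * X 3 + X 0 ^ (n + 1) * X 3 ^ 2) *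
        (X 3 + C (2⁻¹ : ℂ) * ((X 1 - X 0 ^ (n + 1) * X 3) *
          (X 0 * X 2 - 2 * X 1 * X 3 + X 0 ^ (n + 1) * X 3 ^ 2)))) +
      C (2⁻¹ : ℂ) * ((X 1 - X 0 ^ (n + 1) * X 3) *
        ((X 2 - X 0 ^ n * X 3 ^ 2) +
          X 0 ^ n * (X 0 * X 2 - 2 * X 1 * X 3 + X 0 ^ (n + 1) * X 3 ^ 2) ^ 2))]

/-- backward substitution `R4 (n+1) → R4 n` on variables -/
def psiv (n : ℕ) : Fin 4 → P4 :=
  ![X 0,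
    X 1 + X 0 ^ (n + 1) * (X 0 * X 3 - C (2⁻¹ : ℂ) * (X 1 * X 2)),
    -(X 0 ^ n * X 2 ^ 2) + 2 * X 1 * X 3 +
      X 0 ^ n * (X 0 * X 3 - C (2⁻¹ : ℂ) * (X 1 * X 2)) ^ 2,
    X 0 * X 3 - C (2⁻¹ : ℂ) * (X 1 * X 2)]

lemma aeval_phiv_g (n : ℕ) : aeval (phiv n) (g4 n) = g4 (n + 1) := by
  apply MvPolynomial.funext
  intro v
  rw [eval_aeval']
  simp only [g4, phiv, eval_add, eval_sub, eval_mul, eval_pow, eval_X, map_one, eval_ofNat,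
    eval_C, Matrix.cons_val_zero, Matrix.cons_val_one, Matrix.head_cons, Matrix.cons_val_two,
    Matrix.tail_cons, Matrix.cons_val_three, eval_neg]
  ring

lemma aeval_psiv_g (n : ℕ) :
    aeval (psiv n) (g4 (n + 1)) = (1 - X 0 ^ (n + 1) * X 2) * g4 n := by
  apply MvPolynomial.funext
  intro v
  rw [eval_aeval']
  simp only [g4, psiv, eval_add, eval_sub, eval_mul, eval_pow, eval_X, map_one, eval_ofNat,
    eval_C, Matrix.cons_val_zero, Matrix.cons_val_one, Matrix.head_cons, Matrix.cons_val_two,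
    Matrix.tail_cons, Matrix.cons_val_three, eval_neg]
  ring


lemma cpp0 (n : ℕ) :
    Ideal.Quotient.mk (rel4 n) (aeval (psiv n) (phiv n 0)) =
      Ideal.Quotient.mk (rel4 n) (X 0) := by
  rw [Ideal.Quotient.eq, rel4, Ideal.mem_span_singleton']
  refine ⟨0, ?_⟩
  apply MvPolynomial.funext; intro v
  rw [eval_sub, eval_aeval']
  simp only [g4, phiv, psiv, eval_add, eval_sub, eval_mul, eval_pow, eval_X, map_one,
    eval_ofNat, eval_C, Matrix.cons_val_zero, Matrix.cons_val_one, Matrix.head_cons,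
    Matrix.cons_val_two, Matrix.tail_cons, Matrix.cons_val_three, eval_neg, map_zero]
  ring

lemma cpp1 (n : ℕ) :
    Ideal.Quotient.mk (rel4 n) (aeval (psiv n) (phiv n 1)) =
      Ideal.Quotient.mk (rel4 n) (X 1) := by
  rw [Ideal.Quotient.eq, rel4, Ideal.mem_span_singleton']
  refine ⟨0, ?_⟩
  apply MvPolynomial.funext; intro v
  rw [eval_sub, eval_aeval']
  simp only [g4, phiv, psiv, eval_add, eval_sub, eval_mul, eval_pow, eval_X, map_one,
    eval_ofNat, eval_C, Matrix.cons_val_zero, Matrix.cons_val_one, Matrix.head_cons,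
    Matrix.cons_val_two, Matrix.tail_cons, Matrix.cons_val_three, eval_neg, map_zero]
  ring

lemma cpp2 (n : ℕ) :
    Ideal.Quotient.mk (rel4 n) (aeval (psiv n) (phiv n 2)) =
      Ideal.Quotient.mk (rel4 n) (X 2) := by
  rw [Ideal.Quotient.eq, rel4, Ideal.mem_span_singleton']
  refine ⟨-X 2, ?_⟩
  apply MvPolynomial.funext; intro v
  rw [eval_sub, eval_aeval']
  simp only [g4, phiv, psiv, eval_add, eval_sub, eval_mul, eval_pow, eval_X, map_one,
    eval_ofNat, eval_C, Matrix.cons_val_zero, Matrix.cons_val_one, Matrix.head_cons,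
    Matrix.cons_val_two, Matrix.tail_cons, Matrix.cons_val_three, eval_neg, map_zero]
  ring

lemma cpp3 (n : ℕ) :
    Ideal.Quotient.mk (rel4 n) (aeval (psiv n) (phiv n 3)) =
      Ideal.Quotient.mk (rel4 n) (X 3) := by
  rw [Ideal.Quotient.eq, rel4, Ideal.mem_span_singleton']
  refine ⟨-(X 3) - C (2⁻¹ : ℂ) * (X 1 * X 2 ^ 2) * X 0 ^ n + X 0 ^ (n + 1) * X 2 * X 3, ?_⟩
  apply MvPolynomial.funext; intro v
  rw [eval_sub, eval_aeval']
  simp only [g4, phiv, psiv, eval_add, eval_sub, eval_mul, eval_pow, eval_X, map_one,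
    eval_ofNat, eval_C, Matrix.cons_val_zero, Matrix.cons_val_one, Matrix.head_cons,
    Matrix.cons_val_two, Matrix.tail_cons, Matrix.cons_val_three, eval_neg, map_zero]
  ring

lemma cfp0 (n : ℕ) :
    Ideal.Quotient.mk (rel4 (n + 1)) (aeval (phiv n) (psiv n 0)) =
      Ideal.Quotient.mk (rel4 (n + 1)) (X 0) := by
  rw [Ideal.Quotient.eq, rel4, Ideal.mem_span_singleton']
  refine ⟨0, ?_⟩
  apply MvPolynomial.funext; intro v
  rw [eval_sub, eval_aeval']
  simp only [g4, phiv, psiv, eval_add, eval_sub, eval_mul, eval_pow, eval_X, map_one,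
    eval_ofNat, eval_C, Matrix.cons_val_zero, Matrix.cons_val_one, Matrix.head_cons,
    Matrix.cons_val_two, Matrix.tail_cons, Matrix.cons_val_three, eval_neg, map_zero]
  ring

lemma cfp1 (n : ℕ) :
    Ideal.Quotient.mk (rel4 (n + 1)) (aeval (phiv n) (psiv n 1)) =
      Ideal.Quotient.mk (rel4 (n + 1)) (X 1) := by
  rw [Ideal.Quotient.eq, rel4, Ideal.mem_span_singleton']
  refine ⟨-(X 0 ^ (n + 1) * X 3), ?_⟩
  apply MvPolynomial.funext; intro v
  rw [eval_sub, eval_aeval']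
  simp only [g4, phiv, psiv, eval_add, eval_sub, eval_mul, eval_pow, eval_X, map_one,
    eval_ofNat, eval_C, Matrix.cons_val_zero, Matrix.cons_val_one, Matrix.head_cons,
    Matrix.cons_val_two, Matrix.tail_cons, Matrix.cons_val_three, eval_neg, map_zero]
  ring

lemma cfp2 (n : ℕ) :
    Ideal.Quotient.mk (rel4 (n + 1)) (aeval (phiv n) (psiv n 2)) =
      Ideal.Quotient.mk (rel4 (n + 1)) (X 2) := by
  rw [Ideal.Quotient.eq, rel4, Ideal.mem_span_singleton']
  refine ⟨-(X 2) - X 0 ^ n * X 1 ^ 2 * X 3 ^ 2 + X 0 ^ (2 * n + 2) * X 2 * X 3 ^ 2, ?_⟩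
  apply MvPolynomial.funext; intro v
  rw [eval_sub, eval_aeval']
  simp only [g4, phiv, psiv, eval_add, eval_sub, eval_mul, eval_pow, eval_X, map_one,
    eval_ofNat, eval_C, Matrix.cons_val_zero, Matrix.cons_val_one, Matrix.head_cons,
    Matrix.cons_val_two, Matrix.tail_cons, Matrix.cons_val_three, eval_neg, map_zero]
  ring

lemma cfp3 (n : ℕ) :
    Ideal.Quotient.mk (rel4 (n + 1)) (aeval (phiv n) (psiv n 3)) =
      Ideal.Quotient.mk (rel4 (n + 1)) (X 3) := by
  rw [Ideal.Quotient.eq, rel4, Ideal.mem_span_singleton']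
  refine ⟨-(X 3), ?_⟩
  apply MvPolynomial.funext; intro v
  rw [eval_sub, eval_aeval']
  simp only [g4, phiv, psiv, eval_add, eval_sub, eval_mul, eval_pow, eval_X, map_one,
    eval_ofNat, eval_C, Matrix.cons_val_zero, Matrix.cons_val_one, Matrix.head_cons,
    Matrix.cons_val_two, Matrix.tail_cons, Matrix.cons_val_three, eval_neg, map_zero]
  ring

lemma mk_g4 (n : ℕ) : Ideal.Quotient.mk (rel4 n) (g4 n) = 0 := by
  rw [Ideal.Quotient.eq_zero_iff_mem]; exact Ideal.subset_span rfl

def toR4succ (n : ℕ) : R4 n →ₐ[ℂ] R4 (n + 1) :=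
  Ideal.Quotient.liftₐ (rel4 n)
    ((Ideal.Quotient.mkₐ ℂ (rel4 (n + 1))).comp (aeval (phiv n))) (by
      intro a ha
      rw [rel4, Ideal.mem_span_singleton'] at ha
      obtain ⟨c, rfl⟩ := ha
      simp only [AlgHom.comp_apply, map_mul, aeval_phiv_g, Ideal.Quotient.mkₐ_eq_mk,
        mk_g4, mul_zero])

def fromR4succ (n : ℕ) : R4 (n + 1) →ₐ[ℂ] R4 n :=
  Ideal.Quotient.liftₐ (rel4 (n + 1))
    ((Ideal.Quotient.mkₐ ℂ (rel4 n)).comp (aeval (psiv n))) (by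
      intro a ha
      rw [rel4, Ideal.mem_span_singleton'] at ha
      obtain ⟨c, rfl⟩ := ha
      simp only [AlgHom.comp_apply, map_mul, aeval_psiv_g, Ideal.Quotient.mkₐ_eq_mk,
        mk_g4, mul_zero])

lemma toR4succ_mk (n : ℕ) (p : P4) :
    toR4succ n (Ideal.Quotient.mk (rel4 n) p) =
      Ideal.Quotient.mk (rel4 (n + 1)) (aeval (phiv n) p) := rfl

lemma fromR4succ_mk (n : ℕ) (p : P4) :
    fromR4succ n (Ideal.Quotient.mk (rel4 (n + 1)) p) =
      Ideal.Quotient.mk (rel4 n) (aeval (psiv n) p) := rfl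

def stepEquiv (n : ℕ) : R4 n ≃ₐ[ℂ] R4 (n + 1) :=
  AlgEquiv.ofAlgHom (toR4succ n) (fromR4succ n)
    (by
      apply Ideal.Quotient.algHom_ext
      apply MvPolynomial.algHom_ext
      intro i
      simp only [AlgHom.comp_apply, Ideal.Quotient.mkₐ_eq_mk, fromR4succ_mk, toR4succ_mk,
        aeval_X, AlgHom.id_apply]
      fin_cases i
      · exact cfp0 n
      · exact cfp1 n
      · exact cfp2 n
      · exact cfp3 n)
    (by
      apply Ideal.Quotient.algHom_ext
      apply MvPolynomial.algHom_ext
      intro i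
      simp only [AlgHom.comp_apply, Ideal.Quotient.mkₐ_eq_mk, fromR4succ_mk, toR4succ_mk,
        aeval_X, AlgHom.id_apply]
      fin_cases i
      · exact cpp0 n
      · exact cpp1 n
      · exact cpp2 n
      · exact cpp3 n)

def chainEquiv : (n : ℕ) → (R4 0 ≃ₐ[ℂ] R4 n)
  | 0 => AlgEquiv.refl
  | (n + 1) => (chainEquiv n).trans (stepEquiv n)

abbrev Q3 (n : ℕ) : Type := MvPolynomial (Fin 3) ℂ ⧸ relD n

def innerTo (n : ℕ) : Q3 n →ₐ[ℂ] R4 n :=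
  Ideal.Quotient.liftₐ (relD n)
    ((Ideal.Quotient.mkₐ ℂ (rel4 n)).comp (aeval ![X 0, X 1, X 2])) (by
      intro a ha
      rw [relD, Ideal.mem_span_singleton'] at ha
      obtain ⟨c, rfl⟩ := ha
      have h3 : aeval (![X 0, X 1, X 2] : Fin 3 → P4)
          (X 0 ^ (n + 1) * X 2 - X 1 ^ 2 + 1 : MvPolynomial (Fin 3) ℂ) = g4 n := by
        simp only [map_add, map_sub, map_mul, map_pow, map_one, aeval_X,
          Matrix.cons_val_zero, Matrix.cons_val_one, Matrix.head_cons,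
          Matrix.cons_val_two, Matrix.tail_cons, g4]
      simp only [AlgHom.comp_apply, map_mul, h3, Ideal.Quotient.mkₐ_eq_mk, mk_g4, mul_zero])

lemma innerTo_mk (n : ℕ) (p : MvPolynomial (Fin 3) ℂ) :
    innerTo n (Ideal.Quotient.mk (relD n) p) =
      Ideal.Quotient.mk (rel4 n) (aeval ![X 0, X 1, X 2] p) := rfl

def toFun4 (n : ℕ) : Polynomial (Q3 n) →ₐ[ℂ] R4 n :=
  Polynomial.aevalTower (innerTo n) (Ideal.Quotient.mk (rel4 n) (X 3))

def wback (n : ℕ) : Fin 4 → Polynomial (Q3 n) :=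
  ![Polynomial.C (Ideal.Quotient.mk (relD n) (X 0)),
    Polynomial.C (Ideal.Quotient.mk (relD n) (X 1)),
    Polynomial.C (Ideal.Quotient.mk (relD n) (X 2)),
    Polynomial.X]

def backFun4 (n : ℕ) : R4 n →ₐ[ℂ] Polynomial (Q3 n) :=
  Ideal.Quotient.liftₐ (rel4 n) (aeval (wback n)) (by
    intro a ha
    rw [rel4, Ideal.mem_span_singleton'] at ha
    obtain ⟨c, rfl⟩ := ha
    have key : Ideal.Quotient.mk (relD n) (X 0 ^ (n + 1) * X 2 - X 1 ^ 2 + 1) = 0 := by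
      rw [Ideal.Quotient.eq_zero_iff_mem]; exact Ideal.subset_span rfl
    have h4 : aeval (wback n) (g4 n) = 0 := by
      have : aeval (wback n) (g4 n) =
          Polynomial.C (Ideal.Quotient.mk (relD n) (X 0 ^ (n + 1) * X 2 - X 1 ^ 2 + 1)) := by
        simp only [g4, map_add, map_sub, map_mul, map_pow, map_one, aeval_X, wback,
          Matrix.cons_val_zero, Matrix.cons_val_one, Matrix.head_cons,
          Matrix.cons_val_two, Matrix.tail_cons]
      rw [this, key, map_zero]
    rw [map_mul, h4, mul_zero])

lemma backFun4_mk (n : ℕ) (p : P4) :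
    backFun4 n (Ideal.Quotient.mk (rel4 n) p) = aeval (wback n) p := rfl

lemma toFun4_C (n : ℕ) (d : Q3 n) :
    toFun4 n (Polynomial.C d) = innerTo n d := Polynomial.aevalTower_C _ _ _

lemma toFun4_X (n : ℕ) : toFun4 n Polynomial.X = Ideal.Quotient.mk (rel4 n) (X 3) :=
  Polynomial.aevalTower_X _ _

lemma CAlgHom_apply' (n : ℕ) (d : Q3 n) :
    (Polynomial.CAlgHom (R := ℂ) (A := Q3 n)) d = Polynomial.C d := rfl

def bridge (n : ℕ) : Polynomial (Q3 n) ≃ₐ[ℂ] R4 n :=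
  AlgEquiv.ofAlgHom (toFun4 n) (backFun4 n)
    (by
      apply Ideal.Quotient.algHom_ext
      apply MvPolynomial.algHom_ext
      intro i
      fin_cases i <;>
        simp [innerTo_mk, backFun4_mk, toFun4_C, toFun4_X, wback, Ideal.Quotient.liftₐ_apply,
          Ideal.Quotient.lift_mk, AlgHom.coe_comp, Function.comp_apply, aeval_X,
          Ideal.Quotient.mkₐ_eq_mk, Matrix.cons_val_zero, Matrix.cons_val_one,
          Matrix.head_cons, Matrix.cons_val_two, Matrix.tail_cons, Matrix.cons_val_three])
    (by
      apply Polynomial.algHom_ext'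
      · apply Ideal.Quotient.algHom_ext
        apply MvPolynomial.algHom_ext
        intro i
        fin_cases i <;>
          simp [AlgHom.coe_comp, Function.comp_apply, Ideal.Quotient.mkₐ_eq_mk,
            AlgHom.id_apply, CAlgHom_apply', toFun4_C, innerTo_mk, backFun4_mk,
            aeval_X, wback, Matrix.cons_val_zero, Matrix.cons_val_one, Matrix.head_cons,
            Matrix.cons_val_two, Matrix.tail_cons]
      · simp [backFun4_mk, toFun4_X, wback])

theorem statement15 (n m : ℕ) :
    Nonempty (Polynomial (Danielewski n) ≃ₐ[ℂ] Polynomial (Danielewski m)) := by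
  exact ⟨((bridge n).trans ((chainEquiv n).symm.trans
    ((chainEquiv m).trans (bridge m).symm)) :
      Polynomial (Q3 n) ≃ₐ[ℂ] Polynomial (Q3 m))⟩

end
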